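/- Let α ∈ ℝ be irrational and set a(n) = n(n−1)/2. If y ∈ 𝕋 = ℝ/ℤ satisfies 3y ≠ 0 in 𝕋, then it is NOT the case that for every ε > 0 there exists n ∈ ℕ with ‖nα‖ < ε, ‖2nα‖ < ε, ‖y − a(n)α‖ < ε and ‖y − a(2n)α‖ < ε, where ‖·‖ denotes the distance to 0 in 𝕋 and nα, a(n)α are taken mod 1. -/

import Mathlib

/-- Let `α` be irrational, `a n = n (n - 1) / 2`. If `y ∈ 𝕋 = ℝ/ℤ` satisfies
`3 y ≠ 0` in `𝕋`, then it is NOT the case that for every `ε > 0` there is `n ∈ ℕ` (positive)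
with `‖n α‖ < ε`, `‖2 n α‖ < ε`, `‖y - a n • α‖ < ε` and `‖y - a (2 n) • α‖ < ε`. -/
theorem not_ap_return (α : ℝ) (hα : Irrational α) (y : AddCircle (1 : ℝ))
    (hy : 3 • y ≠ 0) :
    ¬ (∀ ε : ℝ, 0 < ε → ∃ n : ℕ, 0 < n ∧
      ‖(((n : ℝ) * α : ℝ) : AddCircle (1 : ℝ))‖ < ε ∧
      ‖(((2 * n : ℝ) * α : ℝ) : AddCircle (1 : ℝ))‖ < ε ∧
      ‖y - ((((n * (n - 1) / 2 : ℕ) : ℝ) * α : ℝ) : AddCircle (1 : ℝ))‖ < ε ∧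
      ‖y - ((((2 * n * (2 * n - 1) / 2 : ℕ) : ℝ) * α : ℝ) : AddCircle (1 : ℝ))‖ < ε) := by
  intro H
  have hc : 0 < ‖3 • y‖ := norm_pos_iff.mpr hy
  obtain ⟨n, hn, h1, h2, h3, h4⟩ := H (‖3 • y‖ / 6) (by linarith)
  obtain ⟨m, rfl⟩ : ∃ m, n = m + 1 := ⟨n - 1, by omega⟩
  -- the natural number identity a(2n) = 4 a(n) + n
  have he : (m + 1) * m / 2 * 2 = (m + 1) * m :=
    Nat.div_mul_cancel (by rw [mul_comm]; exact (Nat.even_mul_succ_self m).two_dvd)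
  have hid : (2 * (m + 1) * (2 * (m + 1) - 1) / 2 : ℕ)
      = 4 * ((m + 1) * ((m + 1) - 1) / 2) + (m + 1) := by
    have h2m : 2 * (m + 1) - 1 = 2 * m + 1 := by omega
    have hm1 : (m + 1) - 1 = m := rfl
    have hdiv : 2 * (m + 1) * (2 * m + 1) / 2 = (m + 1) * (2 * m + 1) := by
      rw [mul_assoc]; exact Nat.mul_div_cancel_left _ two_pos
    rw [h2m, hm1, hdiv]
    nlinarith [he]
  set A : AddCircle (1 : ℝ) := ((((( m + 1) * ((m + 1) - 1) / 2 : ℕ) : ℝ) * α : ℝ) : AddCircle (1 : ℝ))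
  set B : AddCircle (1 : ℝ) := ((((2 * (m + 1) * (2 * (m + 1) - 1) / 2 : ℕ) : ℝ) * α : ℝ) : AddCircle (1 : ℝ))
  set N : AddCircle (1 : ℝ) := ((((m + 1 : ℕ) : ℝ) * α : ℝ) : AddCircle (1 : ℝ))
  have hB : B = 4 • A + N := by
    have : (((2 * (m + 1) * (2 * (m + 1) - 1) / 2 : ℕ) : ℝ) * α : ℝ)
        = 4 • ((((m + 1) * ((m + 1) - 1) / 2 : ℕ) : ℝ) * α) + ((m + 1 : ℕ) : ℝ) * α := by
      rw [hid]; push_cast; ring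
    simp only [B, A, N, this]
    rw [AddCircle.coe_add, ← AddCircle.coe_nsmul]
  have key : 3 • y = 4 • (y - A) - (y - B) - N := by
    rw [hB]; abel
  have hbound : ‖3 • y‖ < ‖3 • y‖ := by
    calc ‖3 • y‖ = ‖4 • (y - A) - (y - B) - N‖ := by rw [key]
    _ ≤ ‖4 • (y - A) - (y - B)‖ + ‖N‖ := norm_sub_le _ _
    _ ≤ ‖4 • (y - A)‖ + ‖y - B‖ + ‖N‖ := by
        have := norm_sub_le (4 • (y - A)) (y - B); linarith
    _ ≤ 4 * ‖y - A‖ + ‖y - B‖ + ‖N‖ := by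
        have : ‖(4:ℕ) • (y - A)‖ ≤ ((4:ℕ):ℝ) * ‖y - A‖ := norm_nsmul_le; push_cast at this; linarith
    _ < 4 * (‖3 • y‖ / 6) + ‖3 • y‖ / 6 + ‖3 • y‖ / 6 := by linarith
    _ = ‖3 • y‖ := by ring
  exact absurd hbound (lt_irrefl _)
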